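/- Let 𝒳 ⊆ ℝ^d be a convex set. A profile x ∈ 𝒳^n is a pure Nash equilibrium of the Battling Influencers Game if and only if x minimizes the potential φ over 𝒳^n, i.e., φ(x) ≤ φ(y) for all y ∈ 𝒳^n. In other words, the set of pure Nash equilibria equals argmin_{x ∈ 𝒳^n} φ(x). -/
import Mathlib


open scoped RealInnerProductSpace

noncomputable section

/-- Player `i`'s loss in the Battling Influencers Game:
`ℓ_i(x) = ‖w_0 x_0 + ∑_{j=1}^n w_j x_j − t_i‖₂²`. -/
def loss {d n : ℕ} (w0 : ℝ) (x0 : EuclideanSpace ℝ (Fin d)) (w : Fin n → ℝ)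
    (t : Fin n → EuclideanSpace ℝ (Fin d)) (i : Fin n)
    (x : Fin n → EuclideanSpace ℝ (Fin d)) : ℝ :=
  ‖w0 • x0 + (∑ j, w j • x j) - t i‖ ^ 2

/-- A pure Nash equilibrium of the Battling Influencers Game with common action
set `X`: every player plays in `X` and no player can strictly decrease its own
loss by a unilateral deviation inside `X`. -/
def IsPureNE {d n : ℕ} (X : Set (EuclideanSpace ℝ (Fin d))) (w0 : ℝ)
    (x0 : EuclideanSpace ℝ (Fin d)) (w : Fin n → ℝ)
    (t : Fin n → EuclideanSpace ℝ (Fin d))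
    (x : Fin n → EuclideanSpace ℝ (Fin d)) : Prop :=
  (∀ i, x i ∈ X) ∧
    ∀ i, ∀ y ∈ X, loss w0 x0 w t i x ≤ loss w0 x0 w t i (Function.update x i y)

/-- The potential function
`φ(x) = ‖∑_{j=0}^n w_j x_j‖₂² − 2 ∑_{j=1}^n w_j ⟨t_j, x_j⟩`. -/
def potential {d n : ℕ} (w0 : ℝ) (x0 : EuclideanSpace ℝ (Fin d)) (w : Fin n → ℝ)
    (t : Fin n → EuclideanSpace ℝ (Fin d))
    (x : Fin n → EuclideanSpace ℝ (Fin d)) : ℝ :=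
  ‖w0 • x0 + (∑ j, w j • x j)‖ ^ 2 - 2 * ∑ j, w j * ⟪t j, x j⟫

/-- If `0 ≤ ε²a + 2εb` for all small positive `ε`, with `a ≥ 0`, then `0 ≤ b`. -/
private lemma eps_lemma {a b : ℝ} (ha : 0 ≤ a)
    (h : ∀ ε : ℝ, 0 < ε → ε ≤ 1 → 0 ≤ ε ^ 2 * a + 2 * ε * b) : 0 ≤ b := by
  by_contra hb
  push_neg at hb
  rcases eq_or_lt_of_le ha with ha0 | ha0
  · have h1 := h 1 one_pos le_rfl
    nlinarith
  · set ε := min 1 (-b / a) with hε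
    have hbp : 0 < -b := by linarith
    have hεpos : 0 < ε := lt_min one_pos (div_pos hbp ha0)
    have hε1 : ε ≤ 1 := min_le_left _ _
    have h2 : ε * a ≤ -b := by
      have hle : ε ≤ -b / a := min_le_right _ _
      calc ε * a ≤ (-b / a) * a := by nlinarith
        _ = -b := by field_simp
    have h3 := h ε hεpos hε1
    nlinarith

private lemma sum_update_smul {d n : ℕ} (w : Fin n → ℝ)
    (x : Fin n → EuclideanSpace ℝ (Fin d)) (i : Fin n)
    (y : EuclideanSpace ℝ (Fin d)) :
    ∑ j, w j • Function.update x i y j = (∑ j, w j • x j) + w i • (y - x i) := by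
  have h : ∀ j : Fin n, w j • Function.update x i y j
      = w j • x j + (if j = i then w i • (y - x i) else 0) := by
    intro j
    by_cases hj : j = i
    · subst hj; simp [smul_sub]
    · simp [Function.update_of_ne hj, hj]
  rw [Finset.sum_congr rfl fun j _ => h j, Finset.sum_add_distrib,
    Finset.sum_ite_eq' Finset.univ i]
  simp

/-- Difference of potentials. -/
private lemma potential_diff {d n : ℕ} (w0 : ℝ) (x0 : EuclideanSpace ℝ (Fin d))
    (w : Fin n → ℝ) (t : Fin n → EuclideanSpace ℝ (Fin d))
    (x y : Fin n → EuclideanSpace ℝ (Fin d)) :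
    potential w0 x0 w t y - potential w0 x0 w t x =
      ‖∑ j, w j • (y j - x j)‖ ^ 2
        + 2 * ∑ j, w j * ⟪(w0 • x0 + ∑ j, w j • x j) - t j, y j - x j⟫ := by
  set S : EuclideanSpace ℝ (Fin d) := w0 • x0 + ∑ j, w j • x j with hS
  set u : EuclideanSpace ℝ (Fin d) := ∑ j, w j • (y j - x j) with hu
  have husub : u = (∑ j, w j • y j) - ∑ j, w j • x j := by
    rw [hu, ← Finset.sum_sub_distrib]
    exact Finset.sum_congr rfl fun j _ => smul_sub _ _ _
  have hSy : w0 • x0 + ∑ j, w j • y j = S + u := by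
    rw [husub, hS]; abel
  have hinner : ⟪S, u⟫ = ∑ j, w j * ⟪S, y j - x j⟫ := by
    rw [hu, inner_sum]
    exact Finset.sum_congr rfl fun j _ => real_inner_smul_right _ _ _
  have hterm : ∀ j : Fin n, w j * ⟪S - t j, y j - x j⟫
      = w j * ⟪S, y j - x j⟫ - (w j * ⟪t j, y j⟫ - w j * ⟪t j, x j⟫) := by
    intro j
    rw [inner_sub_left, show ⟪t j, y j - x j⟫ = ⟪t j, y j⟫ - ⟪t j, x j⟫ from
      inner_sub_right _ _ _]
    ring
  rw [Finset.sum_congr rfl fun j _ => hterm j, Finset.sum_sub_distrib,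
    Finset.sum_sub_distrib]
  unfold potential
  rw [hSy, norm_add_sq_real, hinner]
  ring

/-- Difference of losses under a unilateral deviation. -/
private lemma loss_diff {d n : ℕ} (w0 : ℝ) (x0 : EuclideanSpace ℝ (Fin d))
    (w : Fin n → ℝ) (t : Fin n → EuclideanSpace ℝ (Fin d)) (i : Fin n)
    (x : Fin n → EuclideanSpace ℝ (Fin d)) (y : EuclideanSpace ℝ (Fin d)) :
    loss w0 x0 w t i (Function.update x i y) - loss w0 x0 w t i x =
      ‖w i • (y - x i)‖ ^ 2
        + 2 * (w i * ⟪(w0 • x0 + ∑ j, w j • x j) - t i, y - x i⟫) := by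
  set S : EuclideanSpace ℝ (Fin d) := w0 • x0 + ∑ j, w j • x j with hS
  have h1 : w0 • x0 + (∑ j, w j • Function.update x i y j) - t i
      = (S - t i) + w i • (y - x i) := by
    rw [sum_update_smul, hS]; abel
  have h2 : ⟪S - t i, w i • (y - x i)⟫ = w i * ⟪S - t i, y - x i⟫ :=
    real_inner_smul_right _ _ _
  unfold loss
  rw [h1, norm_add_sq_real, h2, hS]
  ring

/-- For convex `𝒳`, a profile in `𝒳^n` is a pure Nash equilibrium of the
Battling Influencers Game iff it minimizes the potential `φ` over `𝒳^n`. -/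
theorem pNE_iff_min_potential {d n : ℕ} (X : Set (EuclideanSpace ℝ (Fin d)))
    (hX : Convex ℝ X) (w0 : ℝ) (x0 : EuclideanSpace ℝ (Fin d)) (w : Fin n → ℝ)
    (t : Fin n → EuclideanSpace ℝ (Fin d))
    (x : Fin n → EuclideanSpace ℝ (Fin d)) (hx : ∀ i, x i ∈ X) :
    IsPureNE X w0 x0 w t x ↔
      ∀ y : Fin n → EuclideanSpace ℝ (Fin d), (∀ i, y i ∈ X) →
        potential w0 x0 w t x ≤ potential w0 x0 w t y := by
  set S : EuclideanSpace ℝ (Fin d) := w0 • x0 + ∑ j, w j • x j with hS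
  constructor
  · rintro ⟨-, hNE⟩ y hy
    -- each first-order term is nonneg
    have hterm : ∀ i : Fin n, 0 ≤ w i * ⟪S - t i, y i - x i⟫ := by
      intro i
      apply eps_lemma (a := ‖w i • (y i - x i)‖ ^ 2) (by positivity)
      intro ε hε hε1
      set z : EuclideanSpace ℝ (Fin d) := x i + ε • (y i - x i) with hz
      have hzX : z ∈ X := by
        have := hX (hx i) (hy i) (by linarith : (0:ℝ) ≤ 1 - ε) hε.le (by ring)
        convert this using 1
        rw [hz, smul_sub, sub_smul, one_smul]
        abel
      have hle := hNE i z hzX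
      have hdiff := loss_diff w0 x0 w t i x z
      rw [← hS] at hdiff
      have hzsub : z - x i = ε • (y i - x i) := by rw [hz]; abel
      have hn : ‖w i • (z - x i)‖ ^ 2 = ε ^ 2 * ‖w i • (y i - x i)‖ ^ 2 := by
        rw [hzsub, smul_comm, norm_smul, mul_pow, Real.norm_eq_abs, sq_abs]
      have hi : ⟪S - t i, z - x i⟫ = ε * ⟪S - t i, y i - x i⟫ := by
        rw [hzsub]; exact real_inner_smul_right _ _ _
      rw [hn, hi] at hdiff
      nlinarith [hdiff, hle]
    have hpd := potential_diff w0 x0 w t x y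
    rw [← hS] at hpd
    have hsum : 0 ≤ ∑ j, w j * ⟪S - t j, y j - x j⟫ :=
      Finset.sum_nonneg fun j _ => hterm j
    nlinarith [hpd, hsum, sq_nonneg ‖∑ j, w j • (y j - x j)‖]
  · intro hmin
    refine ⟨hx, fun i y hy => ?_⟩
    set y' := Function.update x i y with hy'
    have hy'X : ∀ j, y' j ∈ X := by
      intro j
      by_cases hj : j = i
      · subst hj; simpa [hy'] using hy
      · simpa [hy', Function.update_of_ne hj] using hx j
    have hφ := hmin y' hy'X
    have hpd := potential_diff w0 x0 w t x y'
    rw [← hS] at hpd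
    have hld := loss_diff w0 x0 w t i x y
    rw [← hS, ← hy'] at hld
    -- collapse the sums in hpd
    have hsum1 : ∑ j, w j • (y' j - x j) = w i • (y - x i) := by
      rw [Finset.sum_eq_single_of_mem i (Finset.mem_univ i)]
      · simp [hy']
      · intro j _ hj
        simp [hy', Function.update_of_ne hj]
    have hsum2 : ∑ j, w j * ⟪S - t j, y' j - x j⟫ = w i * ⟪S - t i, y - x i⟫ := by
      rw [Finset.sum_eq_single_of_mem i (Finset.mem_univ i)]
      · simp [hy']
      · intro j _ hj
        simp [hy', Function.update_of_ne hj]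
    rw [hsum1, hsum2] at hpd
    linarith [hpd, hφ, hld]

end
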